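/- Let X ∈ ℝ^{n×p} have columns x₁,…,xₚ with 0 ∈ conv({x₁,…,xₚ}), let f : ℝⁿ → ℝ be any function, let η > 0, and let β* be a global minimizer of β ↦ f(Xβ) + η·Σ_{i=1}^p βᵢ over the nonnegative orthant {β ∈ ℝᵖ : βᵢ ≥ 0 for all i}. Then for every i ∈ [p] with xᵢ ≠ 0 and β*ᵢ > 0, the point xᵢ does not lie in the relative interior (intrinsic interior) of conv({x₁,…,xₚ}). -/

import Mathlib

open Finset

noncomputable section

theorem stmt12 {n p : ℕ}
    (x : Fin p → EuclideanSpace ℝ (Fin n))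
    (h0 : (0 : EuclideanSpace ℝ (Fin n)) ∈ convexHull ℝ (Set.range x))
    (f : EuclideanSpace ℝ (Fin n) → ℝ)
    (η : ℝ) (hη : 0 < η)
    (β : Fin p → ℝ) (hβ : ∀ i, 0 ≤ β i)
    (hmin : ∀ γ : Fin p → ℝ, (∀ i, 0 ≤ γ i) →
      f (∑ i, β i • x i) + η * ∑ i, β i ≤ f (∑ i, γ i • x i) + η * ∑ i, γ i) :
    ∀ i, x i ≠ 0 → 0 < β i →
      x i ∉ intrinsicInterior ℝ (convexHull ℝ (Set.range x)) := by
  intro i hxi hβi hmem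
  set C := convexHull ℝ (Set.range x) with hC
  set A := affineSpan ℝ C with hA
  have hxC : x i ∈ C := subset_convexHull ℝ _ ⟨i, rfl⟩
  have h0A : (0 : EuclideanSpace ℝ (Fin n)) ∈ A := subset_affineSpan ℝ C h0
  have hxA : x i ∈ A := subset_affineSpan ℝ C hxC
  have hsmulA : ∀ t : ℝ, t • x i ∈ A := by
    intro t
    have := AffineSubspace.smul_vsub_vadd_mem A t hxA h0A h0A
    simpa using this
  obtain ⟨y, hy, hyx⟩ := hmem
  let g : ℝ → A := fun t => ⟨t • x i, hsmulA t⟩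
  have hg : Continuous g :=
    Continuous.subtype_mk (continuous_id.smul continuous_const) _
  have hg1 : g 1 = y := Subtype.ext (by simp [g, hyx])
  have hopen : IsOpen (g ⁻¹' interior ((↑) ⁻¹' C : Set A)) :=
    isOpen_interior.preimage hg
  have h1mem : (1 : ℝ) ∈ g ⁻¹' interior ((↑) ⁻¹' C : Set A) := by
    rw [Set.mem_preimage, hg1]; exact hy
  obtain ⟨ε, hε, hball⟩ := Metric.isOpen_iff.mp hopen 1 h1mem
  set t : ℝ := 1 + ε / 2 with ht
  have ht1 : 1 < t := by simp only [ht]; linarith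
  have ht0 : (0 : ℝ) < t := by linarith
  have htmem : t ∈ Metric.ball (1 : ℝ) ε := by
    simp only [Metric.mem_ball, Real.dist_eq, ht]
    rw [show (1:ℝ) + ε / 2 - 1 = ε / 2 by ring, abs_of_nonneg (by positivity : (0:ℝ) ≤ ε / 2)]
    linarith
  have htC : t • x i ∈ C := by
    have h1 := hball htmem
    have h2 := interior_subset h1
    simpa [g] using h2
  rw [hC, convexHull_range_eq_exists_affineCombination] at htC
  obtain ⟨s, w, hw0, hw1, hwx⟩ := htC
  rw [Finset.affineCombination_eq_linear_combination _ _ _ hw1] at hwx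
  set lam : Fin p → ℝ := fun j => if j ∈ s then w j else 0 with hlam
  have hlam0 : ∀ j, 0 ≤ lam j := by
    intro j; simp only [hlam]
    split
    · exact hw0 _ ‹_›
    · exact le_refl 0
  have hlam1 : ∑ j, lam j = 1 := by
    rw [← hw1]
    simp only [hlam]
    rw [Finset.sum_ite_mem, Finset.univ_inter]
  have hlamx : ∑ j, lam j • x j = t • x i := by
    rw [← hwx]
    simp only [hlam, ite_smul, zero_smul]
    rw [Finset.sum_ite_mem, Finset.univ_inter]
  set γ : Fin p → ℝ := fun j => (if j = i then 0 else β j) + (β i / t) * lam j with hγ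
  have hγ0 : ∀ j, 0 ≤ γ j := by
    intro j
    have h1 : 0 ≤ (β i / t) * lam j := mul_nonneg (div_nonneg hβi.le ht0.le) (hlam0 j)
    simp only [hγ]
    split
    · linarith
    · have := hβ j; linarith
  have hvec : ∑ j, γ j • x j = ∑ j, β j • x j := by
    simp only [hγ, add_smul, Finset.sum_add_distrib]
    have h1 : ∑ j, (if j = i then (0:ℝ) else β j) • x j
        = ∑ j, β j • x j - β i • x i := by
      have : ∀ j, (if j = i then (0:ℝ) else β j) • x j
          = β j • x j - (if j = i then β i • x i else 0) := by
        intro j; by_cases h : j = i <;> simp [h]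
      rw [Finset.sum_congr rfl fun j _ => this j, Finset.sum_sub_distrib,
        Finset.sum_ite_eq' Finset.univ i fun _ => β i • x i]
      simp
    have h2 : ∑ j, ((β i / t) * lam j) • x j = β i • x i := by
      rw [show (fun j => ((β i / t) * lam j) • x j)
          = fun j => (β i / t) • (lam j • x j) by funext j; rw [mul_smul]]
      rw [← Finset.smul_sum, hlamx, smul_smul, div_mul_cancel₀ _ (ne_of_gt ht0)]
    rw [h1, h2]
    abel
  have hsum : ∑ j, γ j = (∑ j, β j) - β i + β i / t := by
    simp only [hγ, Finset.sum_add_distrib, ← Finset.mul_sum, hlam1, mul_one]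
    congr 1
    have : ∀ j, (if j = i then (0:ℝ) else β j)
        = β j - (if j = i then β i else 0) := by
      intro j; by_cases h : j = i <;> simp [h]
    rw [Finset.sum_congr rfl fun j _ => this j, Finset.sum_sub_distrib,
      Finset.sum_ite_eq' Finset.univ i fun _ => β i]
    simp
  have hlt : β i / t < β i := div_lt_self hβi ht1
  have := hmin γ hγ0
  rw [hvec, hsum] at this
  nlinarith [this]
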